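/- Let (b,θ,q,m) be a magnetic graph over X with q ≥ 0 and p ∈ [1,∞). Suppose there exist ã ∈ (0,1) and k̃ ≥ 0 such that (1 − ã)⟨Deg,|f|^p⟩ − k̃ ‖f‖_p^p ≤ Q_{p,θ}(f) for all finitely supported f : X → ℂ. Then the graph is (a,k)_p-magnetic-sparse with a = ã/(1−ã) and k = k̃/(1−ã). -/

import Mathlib

open Complex MeasureTheory
open scoped Classical

noncomputable section

variable {X : Type*}

/-- The structural hypotheses of a magnetic graph `(b, θ, q, m)` over `X`:
`b` is nonnegative, symmetric, has zero diagonal and summable rows; the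
magnetic potential `θ` is antisymmetric modulo `2π`; the measure `m` is positive. -/
def IsMagneticGraph (b θ : X → X → ℝ) (m : X → ℝ) : Prop :=
  (∀ x y, 0 ≤ b x y) ∧ (∀ x y, b x y = b y x) ∧ (∀ x, b x x = 0) ∧
  (∀ x, Summable fun y => b x y) ∧
  (∀ x y, ∃ k : ℤ, θ x y + θ y x = 2 * Real.pi * k) ∧
  (∀ x, 0 < m x)

/-- The `p`-frustration index `ι_{p,θ}(W)` of a finite set `W`. -/
def frust (b θ : X → X → ℝ) (p : ℝ) (W : Finset X) : ℝ :=
  sInf {r : ℝ | ∃ τ : X → ℂ, (∀ x ∈ W, ‖τ x‖ = 1) ∧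
    r = (1 / 2) * ∑ x ∈ W, ∑ y ∈ W,
      b x y * ‖τ x - Complex.exp ((θ x y : ℂ) * Complex.I) * τ y‖ ^ p}

/-- The measure `b(∂W)` of the boundary `∂W = (W×(X∖W)) ∪ ((X∖W)×W)`. -/
def bBoundary (b : X → X → ℝ) (W : Finset X) : ℝ :=
  (∑ x ∈ W, ∑' y : {y : X // y ∉ W}, b x ↑y) +
  (∑ y ∈ W, ∑' x : {x : X // x ∉ W}, b ↑x y)

/-- `(a,k)_p`-magnetic-sparseness. -/
def MagSparse (b θ : X → X → ℝ) (q m : X → ℝ) (p a k : ℝ) : Prop :=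
  ∀ W : Finset X,
    (∑ x ∈ W, ∑ y ∈ W, b x y) ≤
      (1 + a) * frust b θ p W +
      a * ((1 / 2) * bBoundary b W + ∑ x ∈ W, max (q x) 0 * m x) +
      k * ∑ x ∈ W, m x

/-- The energy functional `Q_{p,θ}` on finitely supported functions. -/
def Qform (b θ : X → X → ℝ) (q m : X → ℝ) (p : ℝ) (f : X → ℂ) : ℝ :=
  (1 / 2) * ∑' x, ∑' y, b x y * ‖f x - Complex.exp ((θ x y : ℂ) * Complex.I) * f y‖ ^ p +
  ∑' x, q x * ‖f x‖ ^ p * m x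

/-- The weighted vertex degree `Deg(x) = (1/m(x)) Σ_y b(x,y) + q(x)`. -/
def Degf (b : X → X → ℝ) (q m : X → ℝ) (x : X) : ℝ :=
  (1 / m x) * ∑' y, b x y + q x

/-- The pairing `⟨Deg, |f|^p⟩ = Σ_x Deg(x) |f(x)|^p m(x)`. -/
def degPair (b : X → X → ℝ) (q m : X → ℝ) (p : ℝ) (f : X → ℂ) : ℝ :=
  ∑' x, Degf b q m x * ‖f x‖ ^ p * m x

/-- The `p`-norm to the `p`: `‖f‖_p^p = Σ_x |f(x)|^p m(x)`. -/
def pNorm (m : X → ℝ) (p : ℝ) (f : X → ℂ) : ℝ :=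
  ∑' x, ‖f x‖ ^ p * m x

/-- `q ∈ K_α^{p,θ}` with constant `C`: the negative part of `q` is form bounded. -/
def InKClass (b θ : X → X → ℝ) (q m : X → ℝ) (p α C : ℝ) : Prop :=
  ∀ f : X → ℂ, (Function.support f).Finite →
    (∑' x, max (-q x) 0 * ‖f x‖ ^ p * m x) ≤
      α * Qform b θ (fun x => max (q x) 0) m p f + C * pNorm m p f

/-- if `q ≥ 0` and the form lower bound
`(1 − ã)⟨Deg,|f|^p⟩ − k̃‖f‖_p^p ≤ Q_{p,θ}(f)` holds for all finitely supported `f`,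
then the graph is `(ã/(1−ã), k̃/(1−ã))_p`-magnetic-sparse. -/
theorem lower_bound_implies_sparse [Countable X]
    (b θ : X → X → ℝ) (q m : X → ℝ) (hG : IsMagneticGraph b θ m)
    (hq : ∀ x, 0 ≤ q x)
    (p : ℝ) (hp : 1 ≤ p)
    (ta tk : ℝ) (hta0 : 0 < ta) (hta1 : ta < 1) (htk : 0 ≤ tk)
    (hineq : ∀ f : X → ℂ, (Function.support f).Finite →
      (1 - ta) * degPair b q m p f - tk * pNorm m p f ≤ Qform b θ q m p f) :
    MagSparse b θ q m p (ta / (1 - ta)) (tk / (1 - ta)) := by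
  obtain ⟨hb0, hbs, hbd, hbsum, hθa, hm⟩ := hG
  have hp0 : (0:ℝ) ≤ p := le_trans zero_le_one hp
  have hpne : p ≠ 0 := by positivity
  have h1ta : (0:ℝ) < 1 - ta := by linarith
  intro W
  set S := {r : ℝ | ∃ τ : X → ℂ, (∀ x ∈ W, ‖τ x‖ = 1) ∧
    r = (1 / 2) * ∑ x ∈ W, ∑ y ∈ W,
      b x y * ‖τ x - Complex.exp ((θ x y : ℂ) * Complex.I) * τ y‖ ^ p} with hSdef
  have hfr : frust b θ p W = sInf S := rfl
  set B := ∑ x ∈ W, ∑ y ∈ W, b x y with hB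
  set D := ∑ x ∈ W, ∑' y : {y : X // y ∉ W}, b x (↑y) with hD
  set QM := ∑ x ∈ W, q x * m x with hQM
  set M := ∑ x ∈ W, m x with hM
  have hexp : ∀ x y : X, ‖Complex.exp ((θ x y : ℂ) * Complex.I)‖ = 1 := fun x y => by
    exact Complex.norm_exp_ofReal_mul_I (θ x y)
  -- second boundary term equals the first
  have hDD : (∑ y ∈ W, ∑' x : {x : X // x ∉ W}, b (↑x) y) = D := by
    rw [hD]
    exact Finset.sum_congr rfl fun y _ => tsum_congr fun x => hbs _ _
  have hbB : bBoundary b W = 2 * D := by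
    rw [bBoundary, hDD]; ring
  have hD0 : 0 ≤ D := Finset.sum_nonneg fun x _ =>
    tsum_nonneg fun y => hb0 x _
  -- key step: for every r in S we have the inequality
  have key : ∀ r ∈ S, (1 - ta) * B ≤ r + ta * (D + QM) + tk * M := by
    rintro r ⟨τ, hτ, hr⟩
    set f : X → ℂ := fun x => if x ∈ W then τ x else 0 with hf
    have hfsupp : (Function.support f).Finite := by
      apply Set.Finite.subset W.finite_toSet
      intro x hx
      by_contra hxW
      have hxW' : x ∉ W := fun h => hxW (Finset.mem_coe.mpr h)
      exact hx (by simp [hf, hxW'])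
    have hnorm : ∀ x, ‖f x‖ ^ p = if x ∈ W then 1 else 0 := by
      intro x
      by_cases hx : x ∈ W
      · simp [hf, hx, hτ x hx, Real.one_rpow]
      · simp [hf, hx, Real.zero_rpow hpne]
    -- pNorm
    have hpN : pNorm m p f = M := by
      rw [pNorm, tsum_eq_sum (s := W) (fun x hx => by rw [hnorm x, if_neg hx, zero_mul])]
      exact Finset.sum_congr rfl fun x hx => by rw [hnorm x, if_pos hx, one_mul]
    -- potential term
    have hqt : (∑' x, q x * ‖f x‖ ^ p * m x) = QM := by
      rw [tsum_eq_sum (s := W) (fun x hx => by rw [hnorm x, if_neg hx, mul_zero, zero_mul])]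
      exact Finset.sum_congr rfl fun x hx => by rw [hnorm x, if_pos hx, mul_one]
    -- degree pairing
    have hdeg : degPair b q m p f = B + D + QM := by
      rw [degPair, tsum_eq_sum (s := W)
        (fun x hx => by rw [hnorm x, if_neg hx, mul_zero, zero_mul])]
      have : ∀ x ∈ W, Degf b q m x * ‖f x‖ ^ p * m x
          = (∑ y ∈ W, b x y + ∑' y : {y : X // y ∉ W}, b x (↑y)) + q x * m x := by
        intro x hx
        rw [hnorm x, if_pos hx, mul_one, Degf, (Summable.sum_add_tsum_subtype_compl (hbsum x) W)]
        have hmx := (hm x).ne'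
        field_simp
      rw [Finset.sum_congr rfl this, Finset.sum_add_distrib, Finset.sum_add_distrib]
    -- energy
    set g : X → X → ℝ := fun x y =>
      b x y * ‖f x - Complex.exp ((θ x y : ℂ) * Complex.I) * f y‖ ^ p with hg
    have hg0 : ∀ x y, 0 ≤ g x y := fun x y =>
      mul_nonneg (hb0 x y) (Real.rpow_nonneg (norm_nonneg _) _)
    have hfb : ∀ x, ‖f x‖ ≤ 1 := by
      intro x; by_cases hx : x ∈ W
      · simp [hf, hx, hτ x hx]
      · simp [hf, hx]
    have hSg : ∀ x, Summable (g x) := by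
      intro x
      apply Summable.of_nonneg_of_le (hg0 x) (fun y => ?_) ((hbsum x).mul_right (2 ^ p))
      refine mul_le_mul_of_nonneg_left ?_ (hb0 x y)
      refine Real.rpow_le_rpow (norm_nonneg _) ?_ hp0
      calc ‖f x - Complex.exp ((θ x y : ℂ) * Complex.I) * f y‖
          ≤ ‖f x‖ + ‖Complex.exp ((θ x y : ℂ) * Complex.I) * f y‖ := norm_sub_le _ _
        _ ≤ 1 + 1 := by
            rw [norm_mul, hexp x y, one_mul]
            exact add_le_add (hfb x) (hfb y)
        _ = 2 := by norm_num
    have hyout : ∀ x ∈ W, ∀ y, y ∉ W → g x y = b x y := by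
      intro x hx y hy
      have : f y = 0 := by simp [hf, hy]
      rw [hg]
      simp only [this, mul_zero, sub_zero]
      have : ‖f x‖ ^ p = 1 := by rw [hnorm x, if_pos hx]
      rw [this, mul_one]
    have hxout : ∀ x, x ∉ W → ∀ y, g x y = if y ∈ W then b x y else 0 := by
      intro x hx y
      have hfx : f x = 0 := by simp [hf, hx]
      rw [hg]
      simp only [hfx, zero_sub, norm_neg, norm_mul, hexp x y, one_mul]
      by_cases hy : y ∈ W
      · rw [if_pos hy]
        have : ‖f y‖ ^ p = 1 := by rw [hnorm y, if_pos hy]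
        rw [this, mul_one]
      · rw [if_neg hy]
        have : ‖f y‖ ^ p = 0 := by rw [hnorm y, if_neg hy]
        rw [this, mul_zero]
    have hin : ∀ x ∈ W, (∑' y, g x y)
        = (∑ y ∈ W, g x y) + ∑' y : {y : X // y ∉ W}, b x (↑y) := by
      intro x hx
      rw [← Summable.sum_add_tsum_subtype_compl (hSg x) W]
      congr 1
      exact tsum_congr fun y => hyout x hx _ y.2
    have hout : ∀ x, x ∉ W → (∑' y, g x y) = ∑ y ∈ W, b x y := by
      intro x hx
      rw [tsum_eq_sum (s := W) (fun y hy => by rw [hxout x hx y, if_neg hy])]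
      exact Finset.sum_congr rfl fun y hy => by rw [hxout x hx y, if_pos hy]
    have hShcompl : Summable (fun x : {x : X // x ∉ W} => ∑' y, g (↑x) y) := by
      apply Summable.congr (f := fun x : {x : X // x ∉ W} => ∑ y ∈ W, b (↑x) y)
      · exact summable_sum fun y _ =>
          (((hbsum y).congr fun x => hbs y x).subtype _ :)
      · intro x; exact (hout _ x.2).symm
    have hSh : Summable (fun x => ∑' y, g x y) := (W.summable_compl_iff).mp hShcompl
    have hQsum : (∑' x, ∑' y, g x y) = 2 * r + 2 * D := by
      rw [← Summable.sum_add_tsum_subtype_compl hSh W]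
      have h1 : (∑ x ∈ W, ∑' y, g x y) = (∑ x ∈ W, ∑ y ∈ W, g x y) + D := by
        rw [Finset.sum_congr rfl hin, Finset.sum_add_distrib]
      have h2 : (∑' x : {x : X // x ∉ W}, ∑' y, g (↑x) y) = D := by
        calc (∑' x : {x : X // x ∉ W}, ∑' y, g (↑x) y)
            = ∑' x : {x : X // x ∉ W}, ∑ y ∈ W, b (↑x) y :=
              tsum_congr fun x => hout _ x.2
          _ = ∑ y ∈ W, ∑' x : {x : X // x ∉ W}, b (↑x) y :=
              Summable.tsum_finsetSum fun y _ => (((hbsum y).congr fun x => hbs y x).subtype _ :)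
          _ = D := hDD
      have h3 : (∑ x ∈ W, ∑ y ∈ W, g x y) = 2 * r := by
        rw [hr]
        have : ∀ x ∈ W, ∀ y ∈ W, g x y
            = b x y * ‖τ x - Complex.exp ((θ x y : ℂ) * Complex.I) * τ y‖ ^ p := by
          intro x hx y hy
          rw [hg]; simp [hf, hx, hy]
        rw [Finset.sum_congr rfl fun x hx => Finset.sum_congr rfl fun y hy => this x hx y hy]
        ring
      rw [h1, h2, h3]
      ring
    have hQ : Qform b θ q m p f = r + D + QM := by
      rw [Qform, hqt]
      have : (∑' (x : X), ∑' (y : X),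
          b x y * ‖f x - Complex.exp ((θ x y : ℂ) * Complex.I) * f y‖ ^ p) = 2 * r + 2 * D :=
        hQsum
      rw [this]; ring
    have := hineq f hfsupp
    rw [hdeg, hpN, hQ] at this
    nlinarith [this]
  -- conclude
  have hne : S.Nonempty := by
    refine ⟨_, fun _ => 1, fun x _ => norm_one, rfl⟩
  have hc : (1 - ta) * B - ta * (D + QM) - tk * M ≤ sInf S := by
    apply le_csInf hne
    intro r hr
    linarith [key r hr]
  have hQMeq : (∑ x ∈ W, max (q x) 0 * m x) = QM :=
    Finset.sum_congr rfl fun x _ => by rw [max_eq_left (hq x)]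
  rw [hfr, hbB, hQMeq]
  have h2 : (1 - ta) * ((1 + ta / (1 - ta)) * sInf S
      + ta / (1 - ta) * (1 / 2 * (2 * D) + QM) + tk / (1 - ta) * M)
      = sInf S + ta * (D + QM) + tk * M := by
    field_simp
    try ring
  have h3 : (1 - ta) * B ≤ (1 - ta) * ((1 + ta / (1 - ta)) * sInf S
      + ta / (1 - ta) * (1 / 2 * (2 * D) + QM) + tk / (1 - ta) * M) := by
    rw [h2]; linarith
  exact le_of_mul_le_mul_left (by linarith [h3]) h1ta
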